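/- Let N ≥ 1, l ≤ L be natural numbers, let h : Fin (l+1) → ℂ be a nonzero channel tap vector, and let T be the associated N × (N+L) banded Toeplitz matrix. Then there exists a semi-unitary precoder E ∈ Matrix (Fin (N+L)) (Fin L) ℂ, i.e. Eᴴ·E = I_L, such that T·E = 0 and the span of the columns of E equals the kernel of T. -/

import Mathlib

open Matrix

/-- The `N × (N+L)` banded Toeplitz channel matrix built from the taps `h`:
`T i j = h (L + i - j)` when `0 ≤ L + i - j ≤ l`, and `0` otherwise. -/
noncomputable def bandedToeplitz (N l L : ℕ) (h : Fin (l + 1) → ℂ) :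
    Matrix (Fin N) (Fin (N + L)) ℂ :=
  Matrix.of fun i j =>
    if hij : j.val ≤ L + i.val ∧ L + i.val - j.val ≤ l then
      h ⟨L + i.val - j.val, by omega⟩
    else 0

lemma bandedToeplitz_rows_indep (N l L : ℕ) (hlL : l ≤ L)
    (h : Fin (l + 1) → ℂ) (hh : h ≠ 0) (c : Fin N → ℂ)
    (hc : ∀ j : Fin (N + L), ∑ i, bandedToeplitz N l L h i j * c i = 0) :
    c = 0 := by
  obtain ⟨k0, hk0⟩ : ∃ k, h k ≠ 0 := by
    by_contra hcon; push_neg at hcon; exact hh (funext hcon)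
  set s := Finset.univ.filter (fun k => h k ≠ 0) with hs_def
  have hs : s.Nonempty := ⟨k0, by simp [hs_def, hk0]⟩
  set k := s.max' hs with hk_def
  have hk : h k ≠ 0 := (Finset.mem_filter.mp (s.max'_mem hs)).2
  have hkmax : ∀ m, h m ≠ 0 → m ≤ k := fun m hm => s.le_max' m (by simp [hs_def, hm])
  have hkl : k.val ≤ l := by omega
  suffices H : ∀ n (hn : n < N), c ⟨n, hn⟩ = 0 by
    funext i; exact (by simpa using H i.val i.isLt)
  intro n
  induction n using Nat.strong_induction_on with
  | _ n IH =>
    intro hn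
    have hjlt : L + n - k.val < N + L := by omega
    set j : Fin (N + L) := ⟨L + n - k.val, hjlt⟩ with hj_def
    have hsum := hc j
    rw [Finset.sum_eq_single (⟨n, hn⟩ : Fin N)] at hsum
    · have hT : bandedToeplitz N l L h ⟨n, hn⟩ j = h k := by
        simp only [bandedToeplitz, Matrix.of_apply]
        rw [dif_pos ⟨by simp only [hj_def, hk_def, Fin.val_mk]; omega, by simp only [hj_def, hk_def, Fin.val_mk]; omega⟩]
        congr 1
        ext
        simp only [hj_def]
        omega
      rw [hT] at hsum
      exact (mul_eq_zero.mp hsum).resolve_left hk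
    · intro i' _ hne
      rcases lt_trichotomy i'.val n with hlt | heq | hgt
      · have : c i' = 0 := by
          have := IH i'.val hlt i'.isLt
          simpa using this
        rw [this, mul_zero]
      · exact absurd (Fin.ext heq) hne
      · have hT0 : bandedToeplitz N l L h i' j = 0 := by
          simp only [bandedToeplitz, Matrix.of_apply]
          split
          · rename_i hcond
            by_contra hne0
            have := hkmax _ hne0
            rw [Fin.le_def] at this
            simp only [hj_def] at this hcond
            omega
          · rfl
        rw [hT0, zero_mul]
    · intro hmem; exact absurd (Finset.mem_univ _) hmem

lemma bandedToeplitz_ker_finrank (N l L : ℕ) (hlL : l ≤ L)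
    (h : Fin (l + 1) → ℂ) (hh : h ≠ 0) :
    Module.finrank ℂ (LinearMap.ker (bandedToeplitz N l L h).mulVecLin) = L := by
  set T := bandedToeplitz N l L h with hT
  have hinj : Function.Injective Tᵀ.mulVecLin := by
    rw [← LinearMap.ker_eq_bot, LinearMap.ker_eq_bot']
    intro c hc0
    apply bandedToeplitz_rows_indep N l L hlL h hh
    intro j
    have := congrFun hc0 j
    simpa [Matrix.mulVecLin_apply, Matrix.mulVec, dotProduct, Matrix.vecMul, hT,
      Matrix.transpose_apply, mul_comm] using this
  have hrankTt : Matrix.rank Tᵀ = N := by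
    rw [Matrix.rank, LinearMap.finrank_range_of_inj hinj,
      Module.finrank_fintype_fun_eq_card, Fintype.card_fin]
  have hrankT : Matrix.rank T = N := by
    rw [← Matrix.rank_transpose]; exact hrankTt
  have h1 := LinearMap.finrank_range_add_finrank_ker T.mulVecLin
  rw [Module.finrank_fintype_fun_eq_card, Fintype.card_fin] at h1
  have h2 : Module.finrank ℂ (LinearMap.range T.mulVecLin) = N := hrankT
  omega

/-- there exists a semi-unitary precoder `E` (`Eᴴ·E = I_L`) with
`T·E = 0` whose column span is exactly the kernel of `T`. -/
theorem exists_semiUnitary_precoder (N l L : ℕ) (hN : 1 ≤ N) (hlL : l ≤ L)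
    (h : Fin (l + 1) → ℂ) (hh : h ≠ 0) :
    ∃ E : Matrix (Fin (N + L)) (Fin L) ℂ,
      Eᴴ * E = 1 ∧
      bandedToeplitz N l L h * E = 0 ∧
      Submodule.span ℂ (Set.range Eᵀ) =
        LinearMap.ker (bandedToeplitz N l L h).mulVecLin := by
  classical
  set T := bandedToeplitz N l L h with hT
  set K : Submodule ℂ (Fin (N + L) → ℂ) := LinearMap.ker T.mulVecLin with hK
  set e : EuclideanSpace ℂ (Fin (N + L)) ≃ₗ[ℂ] (Fin (N + L) → ℂ) :=
    WithLp.linearEquiv 2 ℂ (Fin (N + L) → ℂ) with he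
  set K' : Submodule ℂ (EuclideanSpace ℂ (Fin (N + L))) := K.comap e.toLinearMap with hK'
  have hKfin : Module.finrank ℂ K = L := bandedToeplitz_ker_finrank N l L hlL h hh
  have hK'K : Module.finrank ℂ K' = L := by
    have e2 : K' ≃ₗ[ℂ] K := e.ofSubmodule' K
    rw [e2.finrank_eq, hKfin]
  let b : OrthonormalBasis (Fin L) ℂ K' := (stdOrthonormalBasis ℂ K').reindex (finCongr hK'K)
  set E : Matrix (Fin (N + L)) (Fin L) ℂ :=
    Matrix.of fun i j => ((b j : EuclideanSpace ℂ (Fin (N + L))) i) with hE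
  have hmem : ∀ j : Fin L, T.mulVecLin (fun i => E i j) = 0 := by
    intro j
    have h1 : (b j : EuclideanSpace ℂ (Fin (N + L))) ∈ K' := (b j).2
    have h2 : e.toLinearMap ((b j : EuclideanSpace ℂ (Fin (N + L)))) ∈ K :=
      Submodule.mem_comap.mp h1
    exact LinearMap.mem_ker.mp h2
  refine ⟨E, ?_, ?_, ?_⟩
  · ext j j'
    have hon := b.orthonormal
    rw [orthonormal_iff_ite] at hon
    have h2 : (inner ℂ ((b j : EuclideanSpace ℂ (Fin (N + L))))
        ((b j' : EuclideanSpace ℂ (Fin (N + L)))) : ℂ) = if j = j' then 1 else 0 := hon j j'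
    rw [PiLp.inner_apply] at h2
    simpa [Matrix.mul_apply, Matrix.conjTranspose_apply, Matrix.one_apply, hE,
      RCLike.inner_apply, mul_comm] using h2
  · ext i j
    have := congrFun (hmem j) i
    simpa [Matrix.mul_apply, Matrix.mulVecLin_apply, Matrix.mulVec,
      dotProduct] using this
  · have hle : Submodule.span ℂ (Set.range Eᵀ) ≤ K := by
      rw [Submodule.span_le]
      rintro _ ⟨j, rfl⟩
      rw [SetLike.mem_coe, hK, LinearMap.mem_ker]
      exact hmem j
    have hli : LinearIndependent ℂ Eᵀ := by
      have h1 : LinearIndependent ℂ (fun j : Fin L => (b j : EuclideanSpace ℂ (Fin (N + L)))) :=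
        b.orthonormal.linearIndependent.map' K'.subtype K'.ker_subtype
      exact h1.map' e.toLinearMap e.ker
    have hsp : Module.finrank ℂ (Submodule.span ℂ (Set.range Eᵀ)) = L := by
      rw [finrank_span_eq_card hli, Fintype.card_fin]
    exact Submodule.eq_of_le_of_finrank_le hle (by rw [hsp, hKfin])
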